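/- For every hyperplane H ∈ 𝔓, the intersection H ∩ U° is nonempty. -/
import Mathlib




noncomputable section

namespace PaperBound

variable {B : Type} {W : Type} [Group W]

/-- The value `B(α_i, α_j)` of the canonical symmetric bilinear form on simple roots:
`-cos (π / m i j)` if `m i j ≠ ∞` (encoded as `M i j ≠ 0`) and `-1` otherwise. -/
def cB (M : CoxeterMatrix B) (i j : B) : ℝ :=
  if M i j = 0 then -1 else - Real.cos (Real.pi / (M i j : ℝ))

/-- The canonical symmetric bilinear form on `V = B → ℝ` (coordinates in the basis of
simple roots `Δ = {α_i}`). -/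
def bform [Fintype B] (M : CoxeterMatrix B) (u v : B → ℝ) : ℝ :=
  ∑ i, ∑ j, u i * v j * cB M i j

/-- The natural pairing `⟨-,-⟩ : V* × V → ℝ`, where both `V` and `V*` are modelled as
`B → ℝ` (coordinates of `V*` taken in the dual basis of `Δ`). -/
def pair [Fintype B] (f v : B → ℝ) : ℝ := ∑ i, f i * v i

/-- The simple root `α_i ∈ V`. -/
def sroot [DecidableEq B] (i : B) : B → ℝ := Pi.single i 1

/-- `ρ` is the geometric representation of `W` on `V = B → ℝ`:
`s_i · v = v - 2 B(α_i, v) α_i`. -/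
def IsGeomRep [Fintype B] [DecidableEq B] (M : CoxeterMatrix B) (cs : CoxeterSystem M W)
    (ρ : W →* (B → ℝ) ≃ₗ[ℝ] (B → ℝ)) : Prop :=
  ∀ (i : B) (v : B → ℝ), ρ (cs.simple i) v = v - (2 * bform M (sroot i) v) • sroot i

/-- `π` is the contragredient representation of `W` on `V* = B → ℝ`:
`⟨w·f, w·v⟩ = ⟨f, v⟩`. -/
def IsContraRep [Fintype B] (ρ : W →* (B → ℝ) ≃ₗ[ℝ] (B → ℝ))
    (π : W →* (B → ℝ) ≃ₗ[ℝ] (B → ℝ)) : Prop :=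
  ∀ (w : W) (f v : B → ℝ), pair (π w f) (ρ w v) = pair f v

/-- The set `Φ⁺` of positive roots: roots (elements of the orbit of the simple roots)
all of whose coordinates in the basis `Δ` are nonnegative. -/
def PhiPos [Fintype B] [DecidableEq B] (ρ : W →* (B → ℝ) ≃ₗ[ℝ] (B → ℝ)) : Set (B → ℝ) :=
  {α | (∃ (w : W) (i : B), α = ρ w (sroot i)) ∧ ∀ j, 0 ≤ α j}

/-- The hyperplane `H_α = {f ∈ V* : ⟨f, α⟩ = 0}`. -/
def hyp [Fintype B] (α : B → ℝ) : Set (B → ℝ) := {f | pair f α = 0}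

/-- The set `𝔓 = {H_α : α ∈ Φ⁺}` of hyperplanes. -/
def Planes [Fintype B] [DecidableEq B] (ρ : W →* (B → ℝ) ≃ₗ[ℝ] (B → ℝ)) :
    Set (Set (B → ℝ)) :=
  {H | ∃ α ∈ PhiPos (W := W) ρ, H = hyp α}

/-- The (open) dominant chamber `C = {f ∈ V* : ⟨f, α_i⟩ > 0 for all i}`. -/
def domCham (B : Type) [Fintype B] [DecidableEq B] : Set (B → ℝ) :=
  {f | ∀ i : B, 0 < pair f (sroot i)}

/-- The Tits cone `U = ⋃_{w ∈ W} w · (closure of C)`. -/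
def titsCone [Fintype B] [DecidableEq B] (π : W →* (B → ℝ) ≃ₗ[ℝ] (B → ℝ)) :
    Set (B → ℝ) :=
  ⋃ w : W, (π w) '' closure (domCham B)

/-- `A ⩀ B := A ∩ B ∩ U°`, where `U°` is the interior of the Tits cone. -/
def dcap [Fintype B] [DecidableEq B] (π : W →* (B → ℝ) ≃ₗ[ℝ] (B → ℝ))
    (A A' : Set (B → ℝ)) : Set (B → ℝ) :=
  A ∩ A' ∩ interior (titsCone π)

/-- A set `𝔔` of hyperplanes is intersecting if `H₁ ⩀ H₂ ≠ ∅` for all `H₁, H₂ ∈ 𝔔`. -/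
def Intersecting [Fintype B] [DecidableEq B] (π : W →* (B → ℝ) ≃ₗ[ℝ] (B → ℝ))
    (Q : Set (Set (B → ℝ))) : Prop :=
  ∀ H₁ ∈ Q, ∀ H₂ ∈ Q, (dcap π H₁ H₂).Nonempty

/-- The chamber `wC ⊆ V*`. -/
def cham [Fintype B] [DecidableEq B] (π : W →* (B → ℝ) ≃ₗ[ℝ] (B → ℝ)) (w : W) :
    Set (B → ℝ) :=
  (π w) '' domCham B

/-- The hyperplane with root `α` separates `f, g ∈ V*`: `⟨f, α⟩⟨g, α⟩ < 0`. -/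
def SepPt [Fintype B] (α f g : B → ℝ) : Prop := pair f α * pair g α < 0

/-- The hyperplane with root `α` separates the subsets `A, A'` of `V*`: every point of
`A ∪ A'` lies off the hyperplane, and every point of `A` is separated from every point
of `A'`. -/
def SepSets [Fintype B] (α : B → ℝ) (A A' : Set (B → ℝ)) : Prop :=
  (∀ f ∈ A ∪ A', pair f α ≠ 0) ∧ ∀ f ∈ A, ∀ g ∈ A', SepPt α f g

/-- The subset `A ⊆ V*` lies entirely on one side of the hyperplane with root `α`. -/
def OneSide [Fintype B] (α : B → ℝ) (A : Set (B → ℝ)) : Prop :=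
  (∀ f ∈ A, pair f α ≠ 0) ∧ ∀ f ∈ A, ∀ g ∈ A, ¬ SepPt α f g

/-- The hyperplane `H ∈ 𝔓` separates the subsets `A, A'` of `V*` (expressed via a
positive root `α` with `H = H_α`; this does not depend on the choice of `α`). -/
def SepSetsH [Fintype B] [DecidableEq B] (ρ : W →* (B → ℝ) ≃ₗ[ℝ] (B → ℝ))
    (H : Set (B → ℝ)) (A A' : Set (B → ℝ)) : Prop :=
  ∃ α ∈ PhiPos (W := W) ρ, H = hyp α ∧ SepSets α A A'


/-- The open half-space bounded by the hyperplane with root `α` on the side not containing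
the chamber `wC`. -/
def halfNeg [Fintype B] [DecidableEq B] (π : W →* (B → ℝ) ≃ₗ[ℝ] (B → ℝ)) (w : W)
    (α : B → ℝ) : Set (B → ℝ) :=
  {f | ∀ f₀ ∈ cham π w, pair f α * pair f₀ α < 0}

/-- Auxiliary recursion producing the sets `𝔄_i` (first component) together with the
cumulative unions `𝔄₀ ∪ ⋯ ∪ 𝔄_i` (second component), starting from `𝔄₀ = A0`:
`𝔄_{i+1} = {P ∈ Q ∖ (𝔄₀ ∪ ⋯ ∪ 𝔄_i) : P ⩀ σ(R) = ∅ for some R ∈ 𝔄_i}`. -/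
def AseqAux [Fintype B] [DecidableEq B] (π : W →* (B → ℝ) ≃ₗ[ℝ] (B → ℝ))
    (Q : Set (Set (B → ℝ))) (σ : W) (A0 : Set (Set (B → ℝ))) :
    ℕ → Set (Set (B → ℝ)) × Set (Set (B → ℝ))
  | 0 => (A0, A0)
  | i + 1 =>
    let prev := AseqAux π Q σ A0 i
    ({P | P ∈ Q ∧ P ∉ prev.2 ∧ ∃ R ∈ prev.1, dcap π P ((π σ) '' R) = ∅},
      prev.2 ∪ {P | P ∈ Q ∧ P ∉ prev.2 ∧ ∃ R ∈ prev.1, dcap π P ((π σ) '' R) = ∅})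

/-- The set `𝔄_i`. -/
def Aseq [Fintype B] [DecidableEq B] (π : W →* (B → ℝ) ≃ₗ[ℝ] (B → ℝ))
    (Q : Set (Set (B → ℝ))) (σ : W) (A0 : Set (Set (B → ℝ))) (i : ℕ) :
    Set (Set (B → ℝ)) :=
  (AseqAux π Q σ A0 i).1

section Words

variable {M : CoxeterMatrix B}

/-- The element `x′_n = x s₁ ⋯ ŝ_{i₁} ⋯ ŝ_{i_{n−1}} ⋯ s_{i_n − 1}`: the product of `x` and
the first `i_n - 1` letters of the word `ω`, with the letters at positions `i₁, …, i_{n−1}`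
omitted. (Positions are recorded `0`-based: the index `ι n : Fin ω.length` corresponds to
the letter `s_{i_{n+1}}` of the paper.) -/
def omitProd (cs : CoxeterSystem M W) (x : W) (ω : List B) {p : ℕ}
    (ι : Fin p → Fin ω.length) (n : Fin p) : W :=
  x * cs.wordProd (((List.finRange ω.length).filter
      (fun j : Fin ω.length => decide ((j : ℕ) < (ι n : ℕ) ∧ ∀ m : Fin p, m < n → j ≠ ι m))).map ω.get)

/-- The condition `ℓ(x′_n s_{i_n}) < ℓ(x′_n)` for all `n = 1, …, p`. -/
def DescCond (cs : CoxeterSystem M W) (x : W) (ω : List B) {p : ℕ}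
    (ι : Fin p → Fin ω.length) : Prop :=
  ∀ n : Fin p, cs.length (omitProd cs x ω ι n * cs.simple (ω.get (ι n))) <
    cs.length (omitProd cs x ω ι n)

/-- The element `x_n := x s₁ ⋯ s_{i_n − 1}`. -/
def xseq (cs : CoxeterSystem M W) (x : W) (ω : List B) {p : ℕ}
    (ι : Fin p → Fin ω.length) (n : Fin p) : W :=
  x * cs.wordProd (ω.take (ι n))

/-- The reflection `σ_n := x_n s_{i_n} x_n⁻¹`. -/
def sigmaseq (cs : CoxeterSystem M W) (x : W) (ω : List B) {p : ℕ}
    (ι : Fin p → Fin ω.length) (n : Fin p) : W :=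
  xseq cs x ω ι n * cs.simple (ω.get (ι n)) * (xseq cs x ω ι n)⁻¹

/-- The element `e_n := σ_n σ_{n−1} ⋯ σ₁`, with `e₀ = e`. -/
def eseq (cs : CoxeterSystem M W) (x : W) (ω : List B) {p : ℕ}
    (ι : Fin p → Fin ω.length) : ℕ → W
  | 0 => 1
  | n + 1 => (if h : n < p then sigmaseq cs x ω ι ⟨n, h⟩ else 1) * eseq cs x ω ι n

/-- A root of the hyperplane `H_n` corresponding to the reflection `σ_n`, namely
`x_n · α_{s_{i_n}}`. -/
def rootseq [Fintype B] [DecidableEq B] (cs : CoxeterSystem M W)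
    (ρ : W →* (B → ℝ) ≃ₗ[ℝ] (B → ℝ)) (x : W) (ω : List B) {p : ℕ}
    (ι : Fin p → Fin ω.length) (n : Fin p) : B → ℝ :=
  ρ (xseq cs x ω ι n) (sroot (ω.get (ι n)))

/-- The hyperplane `H_n ∈ 𝔓` corresponding to the reflection `σ_n`. -/
def Hseq [Fintype B] [DecidableEq B] (cs : CoxeterSystem M W)
    (ρ : W →* (B → ℝ) ≃ₗ[ℝ] (B → ℝ)) (x : W) (ω : List B) {p : ℕ}
    (ι : Fin p → Fin ω.length) (n : Fin p) : Set (B → ℝ) :=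
  hyp (rootseq cs ρ x ω ι n)

end Words



section Statement4Aux

lemma pair_sroot' [Fintype B] [DecidableEq B] (f : B → ℝ) (j : B) : pair f (sroot j) = f j := by
  simp [pair, sroot, Pi.single_apply, mul_ite]

lemma bform_sroot_sroot' [Fintype B] [DecidableEq B] (M : CoxeterMatrix B) (i j : B) :
    bform M (sroot i) (sroot j) = cB M i j := by
  simp [bform, sroot, Pi.single_apply, ite_mul, mul_ite]

lemma pair_sub_smul' [Fintype B] (g v u : B → ℝ) (c : ℝ) :
    pair g (v - c • u) = pair g v - c * pair g u := by
  unfold pair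
  rw [Finset.mul_sum, ← Finset.sum_sub_distrib]
  exact Finset.sum_congr rfl fun x _ => by simp [mul_sub]; ring

lemma cB_diag' (M : CoxeterMatrix B) (i : B) : cB M i i = 1 := by
  simp [cB, M.diagonal i, Real.cos_pi]

lemma abs_cB_le_one' (M : CoxeterMatrix B) (i j : B) : |cB M i j| ≤ 1 := by
  unfold cB
  split
  · norm_num
  · rw [abs_neg]; exact Real.abs_cos_le_one _

lemma pi_mul_apply [Fintype B] (π : W →* (B → ℝ) ≃ₗ[ℝ] (B → ℝ)) (u v : W) (x : B → ℝ) :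
    π (u * v) x = π u (π v x) := by
  rw [map_mul]; rfl

lemma pi_simple_pi_simple [Fintype B] {M : CoxeterMatrix B} (cs : CoxeterSystem M W)
    (π : W →* (B → ℝ) ≃ₗ[ℝ] (B → ℝ)) (i : B) (x : B → ℝ) :
    π (cs.simple i) (π (cs.simple i) x) = x := by
  rw [← pi_mul_apply, cs.simple_mul_simple_self, map_one]; rfl

lemma pair_pi_simple [Fintype B] [DecidableEq B] {M : CoxeterMatrix B}
    (cs : CoxeterSystem M W) (ρ π : W →* (B → ℝ) ≃ₗ[ℝ] (B → ℝ))
    (hρ : IsGeomRep M cs ρ) (hπ : IsContraRep ρ π) (i j : B) (g : B → ℝ) :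
    pair (π (cs.simple i) g) (sroot j) = g j - 2 * cB M i j * g i := by
  have hρρ : ρ (cs.simple i) (ρ (cs.simple i) (sroot j)) = sroot j := by
    rw [← pi_mul_apply, cs.simple_mul_simple_self, map_one]; rfl
  have key := hπ (cs.simple i) g (ρ (cs.simple i) (sroot j))
  rw [hρρ] at key
  rw [key, hρ i (sroot j), pair_sub_smul', bform_sroot_sroot', pair_sroot', pair_sroot']

lemma mem_closure_domCham [Fintype B] [DecidableEq B] (g : B → ℝ) (hg : ∀ j, 0 ≤ g j) :
    g ∈ closure (domCham B) := by
  have hc : Continuous (fun t : ℝ => g + t • (fun _ => (1:ℝ) : B → ℝ)) := by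
    exact continuous_const.add (continuous_id.smul continuous_const)
  have ht : Filter.Tendsto (fun t : ℝ => g + t • (fun _ => (1:ℝ) : B → ℝ))
      (nhdsWithin 0 (Set.Ioi 0)) (nhds g) := by
    have := hc.tendsto 0
    simp only [zero_smul, add_zero] at this
    exact this.mono_left nhdsWithin_le_nhds
  refine mem_closure_of_tendsto ht ?_
  filter_upwards [self_mem_nhdsWithin] with t htt
  intro j
  rw [pair_sroot']
  have : (0:ℝ) < t := htt
  simpa using add_pos_of_nonneg_of_pos (hg j) this

lemma pi_continuous [Fintype B] (π : W →* (B → ℝ) ≃ₗ[ℝ] (B → ℝ)) (u : W) :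
    Continuous (π u) := by
  exact LinearMap.continuous_of_finiteDimensional ((π u) : (B → ℝ) →ₗ[ℝ] (B → ℝ))

end Statement4Aux

/-- for every hyperplane `H ∈ 𝔓`, the intersection `H ∩ U°` is nonempty. -/
theorem statement4 [Fintype B] [DecidableEq B] {M : CoxeterMatrix B}
    (cs : CoxeterSystem M W) (ρ π : W →* (B → ℝ) ≃ₗ[ℝ] (B → ℝ))
    (hρ : IsGeomRep M cs ρ) (hπ : IsContraRep ρ π) :
    ∀ H ∈ Planes ρ, (H ∩ interior (titsCone π)).Nonempty := by
  rintro H ⟨α, ⟨⟨w, i, rfl⟩, -⟩, rfl⟩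
  classical
  set f : B → ℝ := fun j => if j = i then 0 else 1 with hf
  set N : Set (B → ℝ) := {g | ∀ j, j ≠ i → 2 * |g i| < g j} with hN
  have hNopen : IsOpen N := by
    have hNeq : N = ⋂ j, {g : B → ℝ | j ≠ i → 2 * |g i| < g j} := by
      ext g; simp [hN, Set.mem_iInter]
    rw [hNeq]
    refine isOpen_iInter_of_finite fun j => ?_
    by_cases hj : j = i
    · simp [hj]
    · have : {g : B → ℝ | j ≠ i → 2 * |g i| < g j} = {g | 2 * |g i| < g j} := by
        ext g; simp [hj]
      rw [this]
      exact isOpen_lt (continuous_const.mul (continuous_apply i).abs) (continuous_apply j)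
  have hfN : f ∈ N := by
    intro j hj
    simp [hf, hj]
  -- for any g in N, π w g lies in the Tits cone
  have hsub : ∀ g ∈ N, π w g ∈ titsCone π := by
    intro g hg
    by_cases hgi : 0 ≤ g i
    · refine Set.mem_iUnion.2 ⟨w, g, ?_, rfl⟩
      refine mem_closure_domCham g fun j => ?_
      by_cases hj : j = i
      · rw [hj]; exact hgi
      · exact le_of_lt (lt_of_le_of_lt (by positivity) (hg j hj))
    · push_neg at hgi
      refine Set.mem_iUnion.2 ⟨w * cs.simple i, π (cs.simple i) g, ?_, ?_⟩
      · refine subset_closure ?_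
        intro j
        rw [pair_sroot', ← pair_sroot' (π (cs.simple i) g) j,
          pair_pi_simple cs ρ π hρ hπ i j g]
        by_cases hj : j = i
        · subst hj
          rw [cB_diag']
          nlinarith
        · have h1 : 2 * cB M i j * g i ≤ 2 * |g i| := by
            calc 2 * cB M i j * g i ≤ |2 * cB M i j * g i| := le_abs_self _
              _ = 2 * |cB M i j| * |g i| := by rw [abs_mul, abs_mul]; norm_num
              _ ≤ 2 * 1 * |g i| := by
                  have := abs_cB_le_one' M i j
                  have h0 : (0:ℝ) ≤ |g i| := abs_nonneg _
                  nlinarith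
              _ = 2 * |g i| := by ring
          have h2 := hg j hj
          linarith
      · rw [← pi_mul_apply, mul_assoc, cs.simple_mul_simple_self, mul_one]
  -- π w f lies in the interior of the Tits cone
  have hmem : π w f ∈ interior (titsCone π) := by
    rw [mem_interior]
    refine ⟨π w '' N, ?_, ?_, ⟨f, hfN, rfl⟩⟩
    · rintro x ⟨g, hg, rfl⟩
      exact hsub g hg
    · have hL : Function.LeftInverse (π w⁻¹) (π w) := by
        intro x; rw [← pi_mul_apply, inv_mul_cancel, map_one]; rfl
      have hR : Function.RightInverse (π w⁻¹) (π w) := by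
        intro x; rw [← pi_mul_apply, mul_inv_cancel, map_one]; rfl
      have himg : π w '' N = π w⁻¹ ⁻¹' N :=
        congrFun (Set.image_eq_preimage_of_inverse hL hR) N
      rw [himg]
      exact hNopen.preimage (pi_continuous π w⁻¹)
  refine ⟨π w f, ?_, hmem⟩
  show pair (π w f) (ρ w (sroot i)) = 0
  rw [hπ w f (sroot i), pair_sroot']
  simp [hf]

end PaperBound
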